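/- Let G be a connected finite simple graph and G(P) a framework in ℝ^d that is linearly generic, meaning: at every vertex of degree k, the k edge vectors span a (k-1)-dimensional linear subspace and any k-1 of them already span that subspace. Then any two self-stresses w, w' on G(P) are proportional: there exists λ ∈ ℝ with w' = λ • w, provided w is non-zero. -/
import Mathlib

lemma indep_erase {V : Type} [DecidableEq V] {d : ℕ} (S : Finset V) (f : V → Fin d → ℝ)
    (hrank : Module.finrank ℝ ↥(Submodule.span ℝ (f '' (S : Set V))) = S.card - 1)
    (hsub : ∀ u ∈ S, Submodule.span ℝ (f '' ((S : Set V) \ {u})) =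
      Submodule.span ℝ (f '' (S : Set V)))
    {u1 : V} (hu1 : u1 ∈ S)
    (c : V → ℝ) (hc : ∑ u ∈ S.erase u1, c u • f u = 0) :
    ∀ u ∈ S.erase u1, c u = 0 := by
  have hcoe : ((S.erase u1 : Finset V) : Set V) = (S : Set V) \ {u1} := by
    simp [Finset.coe_erase]
  have hind : LinearIndependent ℝ (fun x : (S.erase u1 : Finset V) => f x) := by
    rw [linearIndependent_iff_card_eq_finrank_span]
    have hr : Set.range (fun x : (S.erase u1 : Finset V) => f x)
        = f '' ((S.erase u1 : Finset V) : Set V) := Set.range_restrict f _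
    rw [Set.finrank, hr, hcoe, hsub u1 hu1, hrank, Fintype.card_coe,
      Finset.card_erase_of_mem hu1]
  have := linearIndependent_iff'.mp hind Finset.univ (fun x => c x) ?_
  · intro u hu
    exact this ⟨u, hu⟩ (Finset.mem_univ _)
  · rw [Finset.sum_coe_sort (S.erase u1) (fun u => c u • f u)]
    exact hc

lemma local_prop {V : Type} [DecidableEq V] {d : ℕ} (S : Finset V) (f : V → Fin d → ℝ)
    (hrank : Module.finrank ℝ ↥(Submodule.span ℝ (f '' (S : Set V))) = S.card - 1)
    (hsub : ∀ u ∈ S, Submodule.span ℝ (f '' ((S : Set V) \ {u})) =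
      Submodule.span ℝ (f '' (S : Set V)))
    (a b : V → ℝ)
    (ha : ∑ u ∈ S, a u • f u = 0) (hb : ∑ u ∈ S, b u • f u = 0)
    {u0 : V} (hu0 : u0 ∈ S) (ha0 : a u0 ≠ 0) :
    (∀ u ∈ S, a u ≠ 0) ∧ ∀ u ∈ S, a u0 * b u = b u0 * a u := by
  constructor
  · intro u1 hu1 h1
    have hsum : ∑ u ∈ S.erase u1, a u • f u = 0 := by
      rw [← Finset.add_sum_erase S _ hu1, h1] at ha
      simpa using ha
    have hz := indep_erase S f hrank hsub hu1 a hsum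
    rcases eq_or_ne u0 u1 with rfl | hne
    · exact ha0 h1
    · exact ha0 (hz u0 (Finset.mem_erase.mpr ⟨hne, hu0⟩))
  · set c : V → ℝ := fun u => a u0 * b u - b u0 * a u with hcdef
    have hc : ∑ u ∈ S, c u • f u = 0 := by
      have : ∑ u ∈ S, c u • f u
          = a u0 • ∑ u ∈ S, b u • f u - b u0 • ∑ u ∈ S, a u • f u := by
        rw [Finset.smul_sum, Finset.smul_sum, ← Finset.sum_sub_distrib]
        exact Finset.sum_congr rfl fun u _ => by
          simp [hcdef, sub_smul, mul_smul]
      rw [this, ha, hb, smul_zero, smul_zero, sub_zero]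
    have hc0 : c u0 = 0 := by simp [hcdef, mul_comm]
    have hsum : ∑ u ∈ S.erase u0, c u • f u = 0 := by
      rw [← Finset.add_sum_erase S _ hu0, hc0] at hc
      simpa using hc
    have hz := indep_erase S f hrank hsub hu0 c hsum
    intro u hu
    rcases eq_or_ne u u0 with rfl | hne
    · ring
    · have := hz u (Finset.mem_erase.mpr ⟨hne, hu⟩)
      have : a u0 * b u - b u0 * a u = 0 := this
      linarith

theorem stmt_7 (V : Type) [Fintype V] [DecidableEq V] (G : SimpleGraph V)
    [DecidableRel G.Adj] (hconn : G.Connected)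
    (d : ℕ) (p : V → Fin d → ℝ)
    (hgen_rank : ∀ v : V,
      Module.finrank ℝ ↥(Submodule.span ℝ
        ((fun u => p u - p v) '' (G.neighborFinset v : Set V))) = G.degree v - 1)
    (hgen_sub : ∀ v : V, ∀ u ∈ G.neighborFinset v,
      Submodule.span ℝ ((fun x => p x - p v) '' ((G.neighborFinset v : Set V) \ {u})) =
        Submodule.span ℝ ((fun x => p x - p v) '' (G.neighborFinset v : Set V)))
    (w w' : V → V → ℝ)
    (hsymm : ∀ u v, w u v = w v u) (hsymm' : ∀ u v, w' u v = w' v u)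
    (hsupp : ∀ u v, ¬ G.Adj u v → w u v = 0) (hsupp' : ∀ u v, ¬ G.Adj u v → w' u v = 0)
    (hself : ∀ v : V, 1 < G.degree v →
      ∑ u ∈ G.neighborFinset v, w v u • (p v - p u) = 0)
    (hself' : ∀ v : V, 1 < G.degree v →
      ∑ u ∈ G.neighborFinset v, w' v u • (p v - p u) = 0)
    (hnz : ∃ u v, G.Adj u v ∧ w u v ≠ 0) :
    ∃ l : ℝ, ∀ u v : V, w' u v = l * w u v := by
  obtain ⟨u0, v0, hadj0, hw0⟩ := hnz
  set l : ℝ := w' u0 v0 / w u0 v0 with hl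
  refine ⟨l, ?_⟩
  -- the key local step
  have step : ∀ x y : V, G.Adj x y → w x y ≠ 0 → w' x y = l * w x y →
      ∀ u ∈ G.neighborFinset x, w x u ≠ 0 ∧ w' x u = l * w x u := by
    intro x y hxy hwxy hpxy
    have hy : y ∈ G.neighborFinset x := (SimpleGraph.mem_neighborFinset G x y).mpr hxy
    by_cases hdeg : 1 < G.degree x
    · have hcard : (G.neighborFinset x).card = G.degree x := rfl
      have ha : ∑ u ∈ G.neighborFinset x, w x u • ((fun u => p u - p x) u) = 0 := by
        have h := hself x hdeg
        have : ∑ u ∈ G.neighborFinset x, w x u • (p u - p x)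
            = - ∑ u ∈ G.neighborFinset x, w x u • (p x - p u) := by
          rw [← Finset.sum_neg_distrib]
          exact Finset.sum_congr rfl fun u _ => by rw [← smul_neg, neg_sub]
        simpa [h] using this
      have hb : ∑ u ∈ G.neighborFinset x, w' x u • ((fun u => p u - p x) u) = 0 := by
        have h := hself' x hdeg
        have : ∑ u ∈ G.neighborFinset x, w' x u • (p u - p x)
            = - ∑ u ∈ G.neighborFinset x, w' x u • (p x - p u) := by
          rw [← Finset.sum_neg_distrib]
          exact Finset.sum_congr rfl fun u _ => by rw [← smul_neg, neg_sub]
        simpa [h] using this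
      have hloc := local_prop (G.neighborFinset x) (fun u => p u - p x)
        (by rw [hcard]; exact hgen_rank x) (hgen_sub x) (fun u => w x u) (fun u => w' x u)
        ha hb hy hwxy
      intro u hu
      refine ⟨hloc.1 u hu, ?_⟩
      have h2 : w x y * w' x u = w' x y * w x u := hloc.2 u hu
      have : w x y * w' x u = w x y * (l * w x u) := by
        rw [h2, hpxy]; ring
      exact mul_left_cancel₀ hwxy this
    · intro u hu
      have hone : (G.neighborFinset x).card = 1 := by
        have h1 : 1 ≤ (G.neighborFinset x).card := Finset.card_pos.mpr ⟨y, hy⟩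
        have hc2 : (G.neighborFinset x).card = G.degree x := rfl
        omega
      obtain ⟨z, hz⟩ := Finset.card_eq_one.mp hone
      rw [hz, Finset.mem_singleton] at hu hy
      subst hu; subst hy
      exact ⟨hwxy, hpxy⟩
  -- P v : proportionality at all edges incident to v
  have hbase : ∀ u ∈ G.neighborFinset u0, w u0 u ≠ 0 ∧ w' u0 u = l * w u0 u :=
    step u0 v0 hadj0 hw0 (by rw [hl, div_mul_cancel₀ _ hw0])
  have key : ∀ x y : V, G.Walk x y →
      (∀ u ∈ G.neighborFinset x, w x u ≠ 0 ∧ w' x u = l * w x u) →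
      ∀ u ∈ G.neighborFinset y, w y u ≠ 0 ∧ w' y u = l * w y u := by
    intro x y wk
    induction wk with
    | nil => exact id
    | @cons x z y h q ih =>
      intro hx
      refine ih ?_
      have hz : z ∈ G.neighborFinset x := (SimpleGraph.mem_neighborFinset G x z).mpr h
      obtain ⟨hnz, hp⟩ := hx z hz
      refine step z x h.symm ?_ ?_
      · rwa [← hsymm]
      · rw [← hsymm, ← hsymm']; exact hp
  intro u v
  by_cases huv : G.Adj u v
  · obtain ⟨wk⟩ := hconn.preconnected u0 u
    exact (key u0 u wk hbase v ((SimpleGraph.mem_neighborFinset G u v).mpr huv)).2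
  · rw [hsupp u v huv, hsupp' u v huv, mul_zero]
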